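/- Let E be a finite set of pairs of indices, let w_e ≥ 0 for each e ∈ E, and let x assign to each index a point in ℝ^d such that ‖x_i − x_j‖ > 0 for every edge (i,j) ∈ E. Define C(y) = Σ_{(i,j)∈E} w_{ij} ‖y_i − y_j‖ and the reweighted quadratic Q(y) = Σ_{(i,j)∈E} (w_{ij}/‖x_i − x_j‖) ‖y_i − y_j‖². If x' is any configuration (agreeing with x on the fixed terminal indices) satisfying Q(x') ≤ Q(x), then C(x') ≤ C(x) − Σ_{(i,j)∈E} (w_{ij}/2) · (‖x'_i − x'_j‖ − ‖x_i − x_j‖)² / ‖x_i − x_j‖. In particular each iteration of the iteratively reweighted least squares scheme does not increase the cost C, and decreases it strictly unless all edge lengths are unchanged. -/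

import Mathlib

/-- IRLS descent step: with `C(y) = Σ_{(i,j)∈E} w_{ij} ‖y_i - y_j‖` and reweighted
quadratic `Q(y) = Σ_{(i,j)∈E} (w_{ij}/‖x_i - x_j‖) ‖y_i - y_j‖²`, any configuration `x'`
with `Q(x') ≤ Q(x)` satisfies
`C(x') ≤ C(x) - Σ_{(i,j)∈E} (w_{ij}/2) (‖x'_i - x'_j‖ - ‖x_i - x_j‖)² / ‖x_i - x_j‖`. -/
theorem irls_descent {ι : Type*} {d : ℕ} (E : Finset (ι × ι)) (w : ι × ι → ℝ)
    (hw : ∀ e ∈ E, 0 ≤ w e)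
    (x x' : ι → EuclideanSpace ℝ (Fin d))
    (hx : ∀ e ∈ E, 0 < ‖x e.1 - x e.2‖)
    (hQ : ∑ e ∈ E, (w e / ‖x e.1 - x e.2‖) * ‖x' e.1 - x' e.2‖ ^ 2
        ≤ ∑ e ∈ E, (w e / ‖x e.1 - x e.2‖) * ‖x e.1 - x e.2‖ ^ 2) :
    ∑ e ∈ E, w e * ‖x' e.1 - x' e.2‖
      ≤ ∑ e ∈ E, w e * ‖x e.1 - x e.2‖
        - ∑ e ∈ E, (w e / 2) * (‖x' e.1 - x' e.2‖ - ‖x e.1 - x e.2‖) ^ 2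
            / ‖x e.1 - x e.2‖ := by
  have h1 : ∑ e ∈ E, w e * ‖x' e.1 - x' e.2‖
      = ∑ e ∈ E, ((w e / ‖x e.1 - x e.2‖) * ‖x' e.1 - x' e.2‖ ^ 2 / 2
          + w e * ‖x e.1 - x e.2‖ / 2
          - (w e / 2) * (‖x' e.1 - x' e.2‖ - ‖x e.1 - x e.2‖) ^ 2 / ‖x e.1 - x e.2‖) := by
    refine Finset.sum_congr rfl fun e he => ?_
    have ha := (hx e he).ne'
    field_simp
    ring
  have h2 : ∑ e ∈ E, (w e / ‖x e.1 - x e.2‖) * ‖x e.1 - x e.2‖ ^ 2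
      = ∑ e ∈ E, w e * ‖x e.1 - x e.2‖ := by
    refine Finset.sum_congr rfl fun e he => ?_
    have ha := (hx e he).ne'
    field_simp
  rw [h1, Finset.sum_sub_distrib, Finset.sum_add_distrib, ← Finset.sum_div, ← Finset.sum_div]
  rw [h2] at hQ
  linarith
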